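/- Let φ(b²,s) = (s²(ξe^{b⁴/2} − 1) + b²)·e^{b⁴/4}·s / (b²(b²−s²)) for constants ξ, on a region where b²(b²−s²) ≠ 0. Define E and H from φ via E = (φ₂+2sφ₁)/(2φ) − H(sφ+(b²−s²)φ₂)/φ and H = (φ₂₂−2(φ₁−sφ₁₂))/(2Δ), Δ = φ−sφ₂+(b²−s²)φ₂₂. Then E − sE₂ = 0 and H₂ − sH₂₂ = 0 (hence also E₂₂ = 0 and H₂₂₂ = 0) wherever the expressions are defined. -/

import Mathlib

noncomputable section

/-- Example 1 metric function: φ(b²,s) = (s²(ξe^{b⁴/2} − 1) + b²)e^{b⁴/4}s / (b²(b²−s²)). -/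
def exPhi (ξ : ℝ) : ℝ → ℝ → ℝ := fun u s =>
  (s ^ 2 * (ξ * Real.exp (u ^ 2 / 2) - 1) + u) * Real.exp (u ^ 2 / 4) * s /
    (u * (u - s ^ 2))

/-- partial derivative ∂/∂b². -/
def exPhi1 (ξ : ℝ) : ℝ → ℝ → ℝ := fun u s => deriv (fun t => exPhi ξ t s) u

/-- partial derivative ∂/∂s. -/
def exPhi2 (ξ : ℝ) : ℝ → ℝ → ℝ := fun u s => deriv (fun v => exPhi ξ u v) s

/-- partial derivative ∂²/∂s². -/
def exPhi22 (ξ : ℝ) : ℝ → ℝ → ℝ := fun u s => deriv (fun v => exPhi2 ξ u v) s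

/-- mixed partial ∂²/∂b²∂s. -/
def exPhi12 (ξ : ℝ) : ℝ → ℝ → ℝ := fun u s => deriv (fun t => exPhi2 ξ t s) u

/-- Δ = φ − sφ₂ + (b²−s²)φ₂₂. -/
def exDelta (ξ : ℝ) : ℝ → ℝ → ℝ := fun u s =>
  exPhi ξ u s - s * exPhi2 ξ u s + (u - s ^ 2) * exPhi22 ξ u s

/-- H = (φ₂₂ − 2(φ₁ − sφ₁₂))/(2Δ). -/
def exH (ξ : ℝ) : ℝ → ℝ → ℝ := fun u s =>
  (exPhi22 ξ u s - 2 * (exPhi1 ξ u s - s * exPhi12 ξ u s)) / (2 * exDelta ξ u s)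

/-- E = (φ₂+2sφ₁)/(2φ) − H(sφ+(b²−s²)φ₂)/φ. -/
def exE (ξ : ℝ) : ℝ → ℝ → ℝ := fun u s =>
  (exPhi2 ξ u s + 2 * s * exPhi1 ξ u s) / (2 * exPhi ξ u s) -
    exH ξ u s * (s * exPhi ξ u s + (u - s ^ 2) * exPhi2 ξ u s) / exPhi ξ u s

/-! ### Auxiliary definitions and lemmas -/

def Pf (ξ t : ℝ) : ℝ := Real.exp (t^2/4) * (1 - ξ * Real.exp (t^2/2)) / t
def Qf (ξ t : ℝ) : ℝ := ξ * Real.exp (t^2/2) * Real.exp (t^2/4)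

lemma hA (t : ℝ) : HasDerivAt (fun t : ℝ => Real.exp (t^2/2)) (t * Real.exp (t^2/2)) t := by
  have h : HasDerivAt (fun t : ℝ => t^2/2) t t := by
    have := (hasDerivAt_pow 2 t).div_const 2
    refine this.congr_deriv ?_
    push_cast; ring
  refine ((Real.hasDerivAt_exp (t^2/2)).comp t h).congr_deriv ?_
  ring

lemma hB (t : ℝ) : HasDerivAt (fun t : ℝ => Real.exp (t^2/4)) (t/2 * Real.exp (t^2/4)) t := by
  have h : HasDerivAt (fun t : ℝ => t^2/4) (t/2) t := by
    have := (hasDerivAt_pow 2 t).div_const 4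
    refine this.congr_deriv ?_
    push_cast; ring
  refine ((Real.hasDerivAt_exp (t^2/4)).comp t h).congr_deriv ?_
  ring

def Pf' (ξ t : ℝ) : ℝ :=
  ((t/2 * Real.exp (t^2/4) * (1 - ξ * Real.exp (t^2/2)) +
      Real.exp (t^2/4) * (-(ξ * (t * Real.exp (t^2/2))))) * t -
    Real.exp (t^2/4) * (1 - ξ * Real.exp (t^2/2)) * 1) / t^2

def Qf' (ξ t : ℝ) : ℝ :=
  ξ * (t * Real.exp (t^2/2)) * Real.exp (t^2/4) +
    ξ * Real.exp (t^2/2) * (t/2 * Real.exp (t^2/4))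

lemma hasDerivAt_Pf (ξ : ℝ) {t : ℝ} (ht : t ≠ 0) : HasDerivAt (Pf ξ) (Pf' ξ t) t := by
  have hnum : HasDerivAt (fun t : ℝ => Real.exp (t^2/4) * (1 - ξ * Real.exp (t^2/2)))
      (t/2 * Real.exp (t^2/4) * (1 - ξ * Real.exp (t^2/2)) +
        Real.exp (t^2/4) * (-(ξ * (t * Real.exp (t^2/2))))) t :=
    (hB t).mul (((hA t).const_mul ξ).const_sub 1)
  exact hnum.div (hasDerivAt_id t) ht

lemma hasDerivAt_Qf (ξ t : ℝ) : HasDerivAt (Qf ξ) (Qf' ξ t) t :=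
  ((hA t).const_mul ξ).mul (hB t)

lemma phi_eq (ξ : ℝ) {t v : ℝ} (ht : t ≠ 0) (hv : t - v^2 ≠ 0) :
    exPhi ξ t v = Pf ξ t * v + Qf ξ t * v / (t - v^2) := by
  simp only [exPhi, Pf, Qf]
  field_simp
  ring

lemma isOpen_den (t : ℝ) : IsOpen {w : ℝ | t - w^2 ≠ 0} :=
  (continuous_const.sub (continuous_pow 2)).isOpen_preimage _ isOpen_compl_singleton

lemma isOpen_base (v : ℝ) : IsOpen {t : ℝ | t ≠ 0 ∧ t - v^2 ≠ 0} :=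
  (continuous_id.isOpen_preimage _ isOpen_compl_singleton).inter
    ((continuous_id.sub continuous_const).isOpen_preimage _ isOpen_compl_singleton)

lemma phi2_eq (ξ : ℝ) {t v : ℝ} (ht : t ≠ 0) (hv : t - v^2 ≠ 0) :
    exPhi2 ξ t v = Pf ξ t + Qf ξ t * (t + v^2) / (t - v^2)^2 := by
  have hev : (fun w => exPhi ξ t w) =ᶠ[nhds v]
      (fun w => Pf ξ t * w + Qf ξ t * w / (t - w^2)) := by
    filter_upwards [(isOpen_den t).mem_nhds hv] with w hw using phi_eq ξ ht hw
  have hd : HasDerivAt (fun w : ℝ => Pf ξ t * w + Qf ξ t * w / (t - w^2))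
      (Pf ξ t + Qf ξ t * (t + v^2) / (t - v^2)^2) v := by
    have h1 : HasDerivAt (fun w : ℝ => t - w^2) (-(2*v)) v := by
      simpa using (hasDerivAt_pow 2 v).const_sub t
    have h2 : HasDerivAt (fun w : ℝ => Qf ξ t * w) (Qf ξ t) v := by
      simpa using (hasDerivAt_id v).const_mul (Qf ξ t)
    have h3 := h2.div h1 hv
    have h4 : HasDerivAt (fun w : ℝ => Pf ξ t * w) (Pf ξ t) v := by
      simpa using (hasDerivAt_id v).const_mul (Pf ξ t)
    refine (h4.add h3).congr_deriv ?_
    field_simp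
    ring
  simp only [exPhi2]
  rw [hev.deriv_eq]
  exact hd.deriv

lemma phi22_eq (ξ : ℝ) {t v : ℝ} (ht : t ≠ 0) (hv : t - v^2 ≠ 0) :
    exPhi22 ξ t v = Qf ξ t * (2*v) * (3*t + v^2) / (t - v^2)^3 := by
  have hev : (fun w => exPhi2 ξ t w) =ᶠ[nhds v]
      (fun w => Pf ξ t + Qf ξ t * (t + w^2) / (t - w^2)^2) := by
    filter_upwards [(isOpen_den t).mem_nhds hv] with w hw using phi2_eq ξ ht hw
  have hd : HasDerivAt (fun w : ℝ => Pf ξ t + Qf ξ t * (t + w^2) / (t - w^2)^2)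
      (Qf ξ t * (2*v) * (3*t + v^2) / (t - v^2)^3) v := by
    have h1 : HasDerivAt (fun w : ℝ => t - w^2) (-(2*v)) v := by
      simpa using (hasDerivAt_pow 2 v).const_sub t
    have h1p : HasDerivAt (fun w : ℝ => (t - w^2)^2) (2 * (t - v^2)^1 * (-(2*v))) v :=
      h1.pow 2
    have h2 : HasDerivAt (fun w : ℝ => Qf ξ t * (t + w^2)) (Qf ξ t * (2*v)) v := by
      have : HasDerivAt (fun w : ℝ => t + w^2) (2*v) v := by
        simpa using (hasDerivAt_pow 2 v).const_add t
      simpa using this.const_mul (Qf ξ t)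
    have h3 := h2.div h1p (pow_ne_zero 2 hv)
    refine (h3.const_add (Pf ξ t)).congr_deriv ?_
    field_simp
    ring
  simp only [exPhi22]
  rw [hev.deriv_eq]
  exact hd.deriv

lemma phi1_eq (ξ : ℝ) {t v : ℝ} (ht : t ≠ 0) (hv : t - v^2 ≠ 0) :
    exPhi1 ξ t v = Pf' ξ t * v + Qf' ξ t * v / (t - v^2) - Qf ξ t * v / (t - v^2)^2 := by
  have hev : (fun r => exPhi ξ r v) =ᶠ[nhds t]
      (fun r => Pf ξ r * v + Qf ξ r * v / (r - v^2)) := by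
    filter_upwards [(isOpen_base v).mem_nhds ⟨ht, hv⟩] with r hr using phi_eq ξ hr.1 hr.2
  have hd : HasDerivAt (fun r : ℝ => Pf ξ r * v + Qf ξ r * v / (r - v^2))
      (Pf' ξ t * v + Qf' ξ t * v / (t - v^2) - Qf ξ t * v / (t - v^2)^2) t := by
    have h1 : HasDerivAt (fun r : ℝ => r - v^2) 1 t := (hasDerivAt_id t).sub_const _
    have h2 := ((hasDerivAt_Qf ξ t).mul_const v).div h1 hv
    have h3 := (hasDerivAt_Pf ξ ht).mul_const v
    refine (h3.add h2).congr_deriv ?_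
    field_simp
    ring
  simp only [exPhi1]
  rw [hev.deriv_eq]
  exact hd.deriv

lemma phi12_eq (ξ : ℝ) {t v : ℝ} (ht : t ≠ 0) (hv : t - v^2 ≠ 0) :
    exPhi12 ξ t v = Pf' ξ t + Qf' ξ t * (t + v^2) / (t - v^2)^2 -
      Qf ξ t * (t + 3*v^2) / (t - v^2)^3 := by
  have hev : (fun r => exPhi2 ξ r v) =ᶠ[nhds t]
      (fun r => Pf ξ r + Qf ξ r * (r + v^2) / (r - v^2)^2) := by
    filter_upwards [(isOpen_base v).mem_nhds ⟨ht, hv⟩] with r hr using phi2_eq ξ hr.1 hr.2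
  have hd : HasDerivAt (fun r : ℝ => Pf ξ r + Qf ξ r * (r + v^2) / (r - v^2)^2)
      (Pf' ξ t + Qf' ξ t * (t + v^2) / (t - v^2)^2 - Qf ξ t * (t + 3*v^2) / (t - v^2)^3) t := by
    have h1 : HasDerivAt (fun r : ℝ => r - v^2) 1 t := (hasDerivAt_id t).sub_const _
    have h1p : HasDerivAt (fun r : ℝ => (r - v^2)^2) (2 * (t - v^2)^1 * 1) t := h1.pow 2
    have h2 : HasDerivAt (fun r : ℝ => r + v^2) 1 t := (hasDerivAt_id t).add_const _
    have h3 := ((hasDerivAt_Qf ξ t).mul h2).div h1p (pow_ne_zero 2 hv)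
    refine ((hasDerivAt_Pf ξ ht).add h3).congr_deriv ?_
    simp only [Pi.mul_apply]
    field_simp
    ring
  simp only [exPhi12]
  rw [hev.deriv_eq]
  exact hd.deriv

lemma delta_eq (ξ : ℝ) {t v : ℝ} (ht : t ≠ 0) (hv : t - v^2 ≠ 0) :
    exDelta ξ t v = 6 * Qf ξ t * t * v / (t - v^2)^2 := by
  simp only [exDelta]
  rw [phi_eq ξ ht hv, phi2_eq ξ ht hv, phi22_eq ξ ht hv]
  field_simp
  ring

lemma H_eq (ξ : ℝ) {t v : ℝ} (ht : t ≠ 0) (hv : t - v^2 ≠ 0) (hξ : ξ ≠ 0) (hv0 : v ≠ 0) :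
    exH ξ t v = 1/(2*t) + v^2/2 := by
  have hQ : Qf ξ t ≠ 0 := by
    simp only [Qf]
    positivity
  simp only [exH]
  rw [phi22_eq ξ ht hv, phi1_eq ξ ht hv, phi12_eq ξ ht hv, delta_eq ξ ht hv]
  simp only [Pf, Pf', Qf, Qf']
  field_simp
  ring

lemma E_eq (ξ : ℝ) {t v : ℝ} (ht : t ≠ 0) (hv : t - v^2 ≠ 0) (hξ : ξ ≠ 0) (hv0 : v ≠ 0)
    (hp : exPhi ξ t v ≠ 0) :
    exE ξ t v = -(v/t) := by
  have e1 : exE ξ t v = ((exPhi2 ξ t v + 2 * v * exPhi1 ξ t v) -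
      2 * exH ξ t v * (v * exPhi ξ t v + (t - v^2) * exPhi2 ξ t v)) / (2 * exPhi ξ t v) := by
    simp only [exE]
    field_simp
  have hnum : (exPhi2 ξ t v + 2 * v * exPhi1 ξ t v) -
      2 * exH ξ t v * (v * exPhi ξ t v + (t - v^2) * exPhi2 ξ t v) =
      (-(2 * v / t)) * exPhi ξ t v := by
    rw [H_eq ξ ht hv hξ hv0, phi_eq ξ ht hv, phi2_eq ξ ht hv, phi1_eq ξ ht hv]
    simp only [Pf, Pf', Qf, Qf']
    field_simp
    ring
  rw [e1, hnum]
  field_simp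

/-- for the example metric, E − sE₂ = 0 and H₂ − sH₂₂ = 0,
    hence also E₂₂ = 0 and H₂₂₂ = 0, wherever defined. -/
theorem stmt_13 (ξ : ℝ) (u s : ℝ) (hu : u ≠ 0) (hs : u - s ^ 2 ≠ 0)
    (hΔ : exDelta ξ u s ≠ 0) (hφ : exPhi ξ u s ≠ 0) :
    exE ξ u s - s * deriv (fun v => exE ξ u v) s = 0 ∧
    deriv (fun v => exH ξ u v) s - s * deriv (fun v => deriv (fun w => exH ξ u w) v) s = 0 ∧
    deriv (fun v => deriv (fun w => exE ξ u w) v) s = 0 ∧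
    deriv (fun v => deriv (fun w => deriv (fun r => exH ξ u r) w) v) s = 0 := by
  have hξ : ξ ≠ 0 := by
    intro h
    apply hΔ
    rw [delta_eq ξ hu hs]
    simp [Qf, h]
  have hs0 : s ≠ 0 := by
    intro h
    apply hΔ
    rw [delta_eq ξ hu hs, h]
    simp
  -- the H side
  set TH : Set ℝ := {v | u - v^2 ≠ 0 ∧ v ≠ 0} with hTHdef
  have hTHopen : IsOpen TH :=
    (isOpen_den u).inter (continuous_id.isOpen_preimage _ isOpen_compl_singleton)
  have hsTH : s ∈ TH := ⟨hs, hs0⟩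
  have hH0 : ∀ v ∈ TH, exH ξ u v = 1/(2*u) + v^2/2 := fun v hv => H_eq ξ hu hv.1 hξ hv.2
  have hH1 : ∀ v ∈ TH, deriv (fun w => exH ξ u w) v = v := by
    intro v hv
    have hev : (fun w => exH ξ u w) =ᶠ[nhds v] (fun w => 1/(2*u) + w^2/2) := by
      filter_upwards [hTHopen.mem_nhds hv] with w hw using hH0 w hw
    rw [hev.deriv_eq]
    have h : HasDerivAt (fun w : ℝ => 1/(2*u) + w^2/2) v v := by
      have := ((hasDerivAt_pow 2 v).div_const 2).const_add (1/(2*u))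
      refine this.congr_deriv ?_
      push_cast; ring
    exact h.deriv
  have hH2 : ∀ v ∈ TH, deriv (fun w => deriv (fun r => exH ξ u r) w) v = 1 := by
    intro v hv
    have hev : (fun w => deriv (fun r => exH ξ u r) w) =ᶠ[nhds v] (fun w => w) := by
      filter_upwards [hTHopen.mem_nhds hv] with w hw using hH1 w hw
    rw [hev.deriv_eq]
    exact (hasDerivAt_id v).deriv
  have hH3 : deriv (fun v => deriv (fun w => deriv (fun r => exH ξ u r) w) v) s = 0 := by
    have hev : (fun w => deriv (fun r => deriv (fun q => exH ξ u q) r) w) =ᶠ[nhds s]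
        (fun _ => (1:ℝ)) := by
      filter_upwards [hTHopen.mem_nhds hsTH] with w hw using hH2 w hw
    rw [hev.deriv_eq]
    exact deriv_const s 1
  -- the E side
  set N : ℝ → ℝ := fun v =>
    (v ^ 2 * (ξ * Real.exp (u ^ 2 / 2) - 1) + u) * Real.exp (u ^ 2 / 4) * v with hNdef
  have hphiN : ∀ v, exPhi ξ u v = N v / (u * (u - v ^ 2)) := fun v => rfl
  have hNc : Continuous N := by
    rw [hNdef]; continuity
  set TE : Set ℝ := {v | u - v^2 ≠ 0 ∧ N v ≠ 0} with hTEdef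
  have hTEopen : IsOpen TE :=
    (isOpen_den u).inter (hNc.isOpen_preimage _ isOpen_compl_singleton)
  have hNs : N s ≠ 0 := by
    intro h
    apply hφ
    rw [hphiN s, h, zero_div]
  have hsTE : s ∈ TE := ⟨hs, hNs⟩
  have hE0 : ∀ v ∈ TE, exE ξ u v = -(v/u) := by
    intro v hv
    have hv0 : v ≠ 0 := by
      intro h
      apply hv.2
      rw [hNdef, h]
      ring
    exact E_eq ξ hu hv.1 hξ hv0
      (by rw [hphiN v]; exact div_ne_zero hv.2 (mul_ne_zero hu hv.1))
  have hE1 : ∀ v ∈ TE, deriv (fun w => exE ξ u w) v = -(1/u) := by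
    intro v hv
    have hev : (fun w => exE ξ u w) =ᶠ[nhds v] (fun w => -(w/u)) := by
      filter_upwards [hTEopen.mem_nhds hv] with w hw using hE0 w hw
    rw [hev.deriv_eq]
    exact (((hasDerivAt_id v).div_const u).neg).deriv
  have hE2 : deriv (fun v => deriv (fun w => exE ξ u w) v) s = 0 := by
    have hev : (fun w => deriv (fun r => exE ξ u r) w) =ᶠ[nhds s] (fun _ => -(1/u)) := by
      filter_upwards [hTEopen.mem_nhds hsTE] with w hw using hE1 w hw
    rw [hev.deriv_eq]
    exact deriv_const s _
  refine ⟨?_, ?_, hE2, hH3⟩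
  · rw [hE0 s hsTE, hE1 s hsTE]
    ring
  · rw [hH1 s hsTH, hH2 s hsTH]
    ring

end
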